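/- Let $k$ be a global function field of characteristic $p$, and let $k_v$ be the completion of $k$ at a place $v$. If $a \in k^\times$ satisfies $a = b^p$ for some $b \in k_v^\times$, then $b \in k^\times$. -/

import Mathlib

open IsDedekindDomain

open Polynomial IntermediateField Module
open scoped Multiplicative


theorem aux_pow_p_inj {E : Type*} [Field E] {p : ℕ} [Fact p.Prime] [CharP E p]
    {u w : E} (h : u ^ p = w ^ p) : u = w := by
  have hch : ExpChar E p := ExpChar.prime (Fact.out)
  have h2 : (u - w) ^ p = 0 := by
    rw [sub_pow_expChar, h, sub_self]
  have := pow_eq_zero_iff (Fact.out (p := p.Prime)).ne_zero |>.mp h2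
  exact sub_eq_zero.mp this

theorem aux_minpoly {F E : Type*} [Field F] [Field E] [Algebra F E] {p : ℕ}
    [Fact p.Prime] [CharP E p] {x : E} {y : F} (hy : algebraMap F E y = x ^ p)
    (hx : x ∉ (algebraMap F E).range) :
    IsIntegral F x ∧ (minpoly F x).natDegree = p := by
  have hp : p.Prime := Fact.out
  have hint : IsIntegral F x := by
    refine ⟨X ^ p - C y, monic_X_pow_sub_C y hp.ne_zero, ?_⟩
    simp [hy]
  refine ⟨hint, ?_⟩
  have hirr : Irreducible (X ^ p - C y) := by
    refine X_pow_sub_C_irreducible_of_prime hp fun b hb => hx ?_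
    have h1 : (algebraMap F E b) ^ p = x ^ p := by rw [← map_pow, hb, hy]
    exact ⟨b, aux_pow_p_inj h1⟩
  have heq : minpoly F x = X ^ p - C y := by
    refine (minpoly.eq_of_irreducible_of_monic hirr ?_ (monic_X_pow_sub_C y hp.ne_zero)).symm
    simp [hy]
  rw [heq, natDegree_X_pow_sub_C]

theorem aux_finrank_adjoin {F E : Type*} [Field F] [Field E] [Algebra F E] {p : ℕ}
    [Fact p.Prime] [CharP E p] {x : E} {y : F} (hy : algebraMap F E y = x ^ p)
    (hx : x ∉ (algebraMap F E).range) :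
    finrank F (IntermediateField.adjoin F {x}) = p := by
  obtain ⟨hint, hdeg⟩ := aux_minpoly hy hx
  rw [IntermediateField.adjoin.finrank hint, hdeg]

theorem aux_intDegree_pow {Fq : Type*} [Field Fq] (r : RatFunc Fq) (hr : r ≠ 0) (n : ℕ) :
    (r ^ n).intDegree = n * r.intDegree := by
  induction n with
  | zero => simp [RatFunc.intDegree_one]
  | succ m ih =>
      rw [pow_succ, RatFunc.intDegree_mul (pow_ne_zero m hr) hr, ih]
      push_cast; ring

set_option synthInstance.maxHeartbeats 1000000 in
set_option maxHeartbeats 2000000 in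
theorem aux_rep (p : ℕ) [Fact p.Prime] (Fq k : Type*) [Field Fq] [Finite Fq] [Field k]
    [Algebra (RatFunc Fq) k] [FunctionField Fq k] [CharP k p]
    (π : k) (hπ : ∀ y : k, y ^ p ≠ π) (a : k) :
    ∃ x : ℕ → k, a = ∑ i ∈ Finset.range p, (x i) ^ p * π ^ i := by
  have hp : p.Prime := Fact.out
  set φ : k →+* k := frobenius k p with hφdef
  have hφ : ∀ t : k, φ t = t ^ p := fun t => rfl
  have hφinj : Function.Injective φ := fun u w h => aux_pow_p_inj (p := p) h
  set F' : Subfield k := (algebraMap (RatFunc Fq) k).fieldRange with hF'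
  set B : Subfield k := F'.map φ with hB
  have hBF' : B ≤ F' := by
    rintro t ⟨s, hs, rfl⟩
    exact (hφ s) ▸ pow_mem hs p
  have hBK : B ≤ φ.fieldRange := by
    rintro t ⟨s, hs, rfl⟩
    exact ⟨s, rfl⟩
  let EF : IntermediateField B k := F'.toIntermediateField fun x => hBF' x.2
  let EK : IntermediateField B k := (φ.fieldRange).toIntermediateField fun x => hBK x.2
  -- the element X
  set x : k := algebraMap (RatFunc Fq) k RatFunc.X with hx
  have hxF : x ∈ F' := ⟨RatFunc.X, rfl⟩
  have hxpB : x ^ p ∈ B := ⟨x, hxF, rfl⟩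
  have hxB : x ∉ B := by
    rintro ⟨s, ⟨r, rfl⟩, hs⟩
    rw [hφ, ← map_pow] at hs
    have hrX : r ^ p = RatFunc.X :=
      (FaithfulSMul.algebraMap_injective (RatFunc Fq) k) hs
    have hr0 : r ≠ 0 := by
      rintro rfl
      rw [zero_pow (Fact.out (p := p.Prime)).ne_zero] at hrX
      exact RatFunc.X_ne_zero hrX.symm
    have := congrArg RatFunc.intDegree hrX
    rw [aux_intDegree_pow r hr0, RatFunc.intDegree_X] at this
    have hdvd : (p : ℤ) ∣ 1 := ⟨r.intDegree, this.symm⟩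
    have hle : (p : ℤ) ≤ 1 := Int.le_of_dvd one_pos hdvd
    have : (2 : ℤ) ≤ (p : ℤ) := by exact_mod_cast hp.two_le
    omega
  -- Fq has char p and frobenius is surjective on Fq
  have hkinj : Function.Injective (algebraMap (RatFunc Fq) k) := (algebraMap (RatFunc Fq) k).injective
  have hcharRF : CharP (RatFunc Fq) p := RingHom.charP _ hkinj p
  have hcharFq : CharP Fq p := RingHom.charP (algebraMap Fq (RatFunc Fq))
    (algebraMap Fq (RatFunc Fq)).injective p
  have hsurjFq : ∀ c : Fq, ∃ d : Fq, d ^ p = c := by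
    intro c
    have hinj : Function.Injective (fun d : Fq => d ^ p) := fun u w h => aux_pow_p_inj (p := p) h
    exact Finite.injective_iff_surjective.mp hinj c
  set T : IntermediateField B k := IntermediateField.adjoin (↥B) {x} with hT
  have hpoly : ∀ P : Polynomial Fq,
      algebraMap (RatFunc Fq) k (algebraMap (Polynomial Fq) (RatFunc Fq) P) ∈ T := by
    intro P
    induction P using Polynomial.induction_on' with
    | add P Q hP hQ => rw [map_add, map_add]; exact add_mem hP hQ
    | monomial n c =>
        obtain ⟨d, hd⟩ := hsurjFq c
        rw [← Polynomial.C_mul_X_pow_eq_monomial, map_mul, map_mul, map_pow, map_pow]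
        refine mul_mem ?_ (pow_mem (IntermediateField.mem_adjoin_simple_self (↥B) x) n)
        set u : k := algebraMap (RatFunc Fq) k (algebraMap (Polynomial Fq) (RatFunc Fq)
          (Polynomial.C d)) with hu
        have hmain : algebraMap (RatFunc Fq) k (algebraMap (Polynomial Fq) (RatFunc Fq)
            (Polynomial.C c)) = u ^ p := by
          rw [hu, ← map_pow, ← map_pow, ← hd, map_pow, map_pow]
        rw [hmain]
        have hmem : u ^ p ∈ B := ⟨u, ⟨_, rfl⟩, rfl⟩
        exact T.algebraMap_mem ⟨u ^ p, hmem⟩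
  have hEFle : ∀ r : RatFunc Fq, algebraMap (RatFunc Fq) k r ∈ T := by
    intro r
    rw [← RatFunc.num_div_denom r, map_div₀]
    exact div_mem (hpoly _) (hpoly _)
  have hEF_adj : EF = T := by
    apply le_antisymm
    · intro t ht
      obtain ⟨r, rfl⟩ := ht
      exact hEFle r
    · exact IntermediateField.adjoin_le_iff.mpr (by simpa using (show x ∈ EF from hxF))
  have hxnotrange : x ∉ (algebraMap (↥B) k).range := by
    rintro ⟨⟨t, ht⟩, rfl⟩
    exact hxB ht
  have hfinrk_B_EF : finrank (↥B) (↥EF) = p := by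
    rw [hEF_adj, hT]
    exact aux_finrank_adjoin (y := (⟨x ^ p, hxpB⟩ : ↥B)) rfl hxnotrange
  obtain ⟨hintx, -⟩ := aux_minpoly (E := k) (y := (⟨x ^ p, hxpB⟩ : ↥B)) rfl hxnotrange
  -- ring equivalences
  let gEF : RatFunc Fq →+* ↥EF :=
    { toFun := fun r => ⟨algebraMap (RatFunc Fq) k r, ⟨r, rfl⟩⟩
      map_one' := Subtype.ext (map_one _)
      map_mul' := fun r s => Subtype.ext (map_mul _ r s)
      map_zero' := Subtype.ext (map_zero _)
      map_add' := fun r s => Subtype.ext (map_add _ r s) }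
  have hgEFbij : Function.Bijective gEF := by
    constructor
    · intro r s h
      exact hkinj (congrArg Subtype.val h)
    · rintro ⟨t, r, rfl⟩
      exact ⟨r, rfl⟩
  let eEF : RatFunc Fq ≃+* ↥EF := RingEquiv.ofBijective gEF hgEFbij
  have hrank1 : Module.rank (RatFunc Fq) k = Module.rank (↥EF) k := by
    refine Algebra.rank_eq_of_equiv_equiv eEF (RingEquiv.refl k) ?_
    ext r
    rfl
  let gEK : k →+* ↥EK :=
    { toFun := fun t => ⟨φ t, ⟨t, rfl⟩⟩
      map_one' := Subtype.ext (map_one φ)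
      map_mul' := fun r s => Subtype.ext (map_mul φ r s)
      map_zero' := Subtype.ext (map_zero φ)
      map_add' := fun r s => Subtype.ext (map_add φ r s) }
  have hgEKbij : Function.Bijective gEK := by
    constructor
    · intro r s h
      exact hφinj (congrArg Subtype.val h)
    · rintro ⟨t, s, rfl⟩
      exact ⟨s, rfl⟩
  let eEK : k ≃+* ↥EK := RingEquiv.ofBijective gEK hgEKbij
  let gB : ↥EF →+* ↥B :=
    { toFun := fun t => ⟨φ t.1, ⟨t.1, t.2, rfl⟩⟩
      map_one' := Subtype.ext (map_one φ)
      map_mul' := fun r s => Subtype.ext (map_mul φ r.1 s.1)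
      map_zero' := Subtype.ext (map_zero φ)
      map_add' := fun r s => Subtype.ext (map_add φ r.1 s.1) }
  have hgBbij : Function.Bijective gB := by
    constructor
    · intro r s h
      exact Subtype.ext (hφinj (congrArg Subtype.val h))
    · rintro ⟨t, s, hs, rfl⟩
      exact ⟨⟨s, hs⟩, rfl⟩
  let eB : ↥EF ≃+* ↥B := RingEquiv.ofBijective gB hgBbij
  have hrank2 : Module.rank (↥EF) k = Module.rank (↥B) (↥EK) := by
    refine Algebra.rank_eq_of_equiv_equiv eB eEK ?_
    ext t
    rfl
  -- finite dimensionality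
  haveI hFD_EF_k : FiniteDimensional (↥EF) k := by
    rw [FiniteDimensional, ← rank_lt_aleph0_iff, ← hrank1, rank_lt_aleph0_iff]
    exact ‹FunctionField Fq k›
  haveI hFD_B_EF : FiniteDimensional (↥B) (↥EF) := by
    rw [hEF_adj, hT]
    exact IntermediateField.adjoin.finiteDimensional hintx
  haveI hFD_B_k : FiniteDimensional (↥B) k := FiniteDimensional.trans (↥B) (↥EF) k
  haveI hFD_EK_k : FiniteDimensional (↥EK) k := FiniteDimensional.right (↥B) (↥EK) k
  -- the dimension count
  have hfinrank1 : finrank (RatFunc Fq) k = finrank (↥EF) k := congrArg Cardinal.toNat hrank1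
  have hfinrank2 : finrank (↥EF) k = finrank (↥B) (↥EK) := congrArg Cardinal.toNat hrank2
  have ht1 : finrank (↥B) (↥EF) * finrank (↥EF) k = finrank (↥B) k :=
    Module.finrank_mul_finrank _ _ _
  have ht2 : finrank (↥B) (↥EK) * finrank (↥EK) k = finrank (↥B) k :=
    Module.finrank_mul_finrank _ _ _
  have hn0 : 0 < finrank (RatFunc Fq) k := Module.finrank_pos
  have hfinrank_EK : finrank (↥EK) k = p := by
    have h1 : finrank (RatFunc Fq) k * finrank (↥EK) k = finrank (RatFunc Fq) k * p :=
      calc finrank (RatFunc Fq) k * finrank (↥EK) k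
          = finrank (↥B) (↥EK) * finrank (↥EK) k := by rw [hfinrank1.trans hfinrank2]
        _ = finrank (↥B) k := ht2
        _ = finrank (↥B) (↥EF) * finrank (↥EF) k := ht1.symm
        _ = finrank (RatFunc Fq) k * p := by rw [hfinrk_B_EF, ← hfinrank1, Nat.mul_comm]
    exact Nat.eq_of_mul_eq_mul_left hn0 h1
  -- adjoin π over EK
  have hπK : π ^ p ∈ EK := ⟨π, rfl⟩
  have hπnotrange : π ∉ (algebraMap (↥EK) k).range := by
    rintro ⟨⟨t, s, rfl⟩, rfl⟩
    exact hπ s rfl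
  obtain ⟨hintπ, -⟩ := aux_minpoly (E := k) (y := (⟨π ^ p, hπK⟩ : ↥EK)) rfl hπnotrange
  set A : IntermediateField (↥EK) k := IntermediateField.adjoin (↥EK) {π} with hA
  have hfinA : finrank (↥EK) (↥A) = p :=
    aux_finrank_adjoin (y := (⟨π ^ p, hπK⟩ : ↥EK)) rfl hπnotrange
  have hAtop : A = ⊤ := by
    refine IntermediateField.eq_of_le_of_finrank_eq le_top ?_
    rw [hfinA, IntermediateField.finrank_top']
    exact hfinrank_EK.symm
  have haA : a ∈ A := by rw [hAtop]; exact IntermediateField.mem_top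
  set PB : PowerBasis (↥EK) (↥A) := IntermediateField.adjoin.powerBasis hintπ with hPB
  have hdim : PB.dim = p := by rw [← hfinA]; exact PB.finrank.symm
  set c := PB.basis.repr ⟨a, haA⟩ with hc
  have hsum : (⟨a, haA⟩ : ↥A) = ∑ i : Fin PB.dim, c i • PB.basis i := (PB.basis.sum_repr _).symm
  have hsum' : a = ∑ i : Fin PB.dim, (c i : k) * π ^ (i : ℕ) := by
    calc a = algebraMap (↥A) k ⟨a, haA⟩ := rfl
      _ = ∑ i : Fin PB.dim, algebraMap (↥A) k (c i • PB.basis i) := by rw [← map_sum, ← hsum]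
      _ = ∑ i : Fin PB.dim, (c i : k) * π ^ (i : ℕ) := by
          refine Finset.sum_congr rfl fun i _ => ?_
          rw [Algebra.smul_def, map_mul, ← IsScalarTower.algebraMap_apply, PB.coe_basis, map_pow]
          congr 2
  have hmemc : ∀ i : Fin PB.dim, ∃ s : k, φ s = (c i : k) := fun i => (c i).2
  choose w hw using hmemc
  refine ⟨fun i => if h : i < PB.dim then w ⟨i, h⟩ else 0, ?_⟩
  rw [hsum', show Finset.range p = Finset.range PB.dim by rw [hdim],
    ← Fin.sum_univ_eq_sum_range (fun i => (if h : i < PB.dim then w ⟨i, h⟩ else 0) ^ p * π ^ i)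
      PB.dim]
  refine Finset.sum_congr rfl fun i _ => ?_
  rw [dif_pos i.isLt, Fin.eta]
  congr 1
  exact (hw i).symm

set_option maxHeartbeats 1000000 in
set_option synthInstance.maxHeartbeats 1000000 in
/-- Let `k` be a global function field of characteristic `p` and let `k_v` be the
completion of `k` at a place `v` (a height-one prime of the ring of `S`-integers `R`, whose
fraction field is `k`).  If `a ∈ k^×` satisfies `a = b^p` for some `b ∈ k_v^×`, then `b`
already lies in `k`. -/
theorem stmt_0 (p : ℕ) [Fact p.Prime] (Fq k : Type*) [Field Fq] [Finite Fq] [Field k]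
    [Algebra (RatFunc Fq) k] [FunctionField Fq k] [CharP k p]
    (R : Type*) [CommRing R] [IsDedekindDomain R] [Algebra R k] [IsFractionRing R k]
    (v : HeightOneSpectrum R)
    (a : k) (ha : a ≠ 0) (b : v.adicCompletion k) (hb : b ≠ 0)
    (hab : b ^ p = algebraMap k (v.adicCompletion k) a) :
    ∃ c : k, algebraMap k (v.adicCompletion k) c = b := by
  have hp : p.Prime := Fact.out
  haveI : CharP (v.adicCompletion k) p :=
    charP_of_injective_ringHom (algebraMap k (v.adicCompletion k)).injective p
  haveI hch : ExpChar (v.adicCompletion k) p := ExpChar.prime Fact.out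
  obtain ⟨π, hπval⟩ := v.valuation_exists_uniformizer k
  unfold WithZero.exp at hπval
  have hπ0 : π ≠ 0 := by
    intro h
    rw [h, map_zero] at hπval
    exact WithZero.zero_ne_coe hπval
  have hπnotp : ∀ y : k, y ^ p ≠ π := by
    intro y hy
    have hy0 : y ≠ 0 := by
      rintro rfl
      rw [zero_pow hp.ne_zero] at hy
      exact hπ0 hy.symm
    have hvy : v.valuation k y ≠ 0 := (Valuation.ne_zero_iff _).mpr hy0
    obtain ⟨m, hm⟩ := WithZero.ne_zero_iff_exists.mp hvy
    have h1 : (v.valuation k y) ^ p = ((Multiplicative.ofAdd (-1 : ℤ) : Multiplicative ℤ) : WithZero (Multiplicative ℤ)) := by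
      rw [← map_pow, hy, hπval]
    rw [← hm, ← WithZero.coe_pow, WithZero.coe_inj] at h1
    have h2 := congrArg Multiplicative.toAdd h1
    rw [toAdd_pow, toAdd_ofAdd] at h2
    have hdvd : (p : ℤ) ∣ -1 := ⟨Multiplicative.toAdd m, by rw [← h2]; push_cast; ring⟩
    have hle : (p : ℤ) ≤ 1 := by
      have := Int.le_of_dvd one_pos (dvd_neg.mp hdvd)
      omega
    have : (2 : ℤ) ≤ (p : ℤ) := by exact_mod_cast hp.two_le
    omega
  obtain ⟨x, hxrep⟩ := aux_rep p Fq k π hπnotp a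
  set f : k →+* v.adicCompletion k := algebraMap k (v.adicCompletion k) with hf
  have hval : ∀ t : k, Valued.v (f t) = v.valuation k t := fun t =>
    v.valuedAdicCompletion_eq_valuation' t
  set g : ℕ → v.adicCompletion k := fun i => f ((x i) ^ p * π ^ i) with hg
  have hfa : f a = ∑ i ∈ Finset.range p, g i := by rw [hxrep, map_sum]
  set cc : v.adicCompletion k := b - f (x 0) with hcc
  have hg0 : g 0 = (f (x 0)) ^ p := by
    rw [hg]
    simp [map_pow]
  have hccp : cc ^ p = ∑ i ∈ Finset.Ico 1 p, g i := by
    have h1 : cc ^ p = b ^ p - (f (x 0)) ^ p := sub_pow_expChar _ _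
    have h2 : ∑ i ∈ Finset.range p, g i = g 0 + ∑ i ∈ Finset.Ico 1 p, g i := by
      rw [Finset.range_eq_Ico, Finset.sum_eq_sum_Ico_succ_bot hp.pos]
    rw [h1, hab, hfa, h2, hg0]
    ring
  by_cases hzero : ∀ i ∈ Finset.Ico 1 p, x i = 0
  · have hcp0 : cc ^ p = 0 := by
      rw [hccp]
      exact Finset.sum_eq_zero fun i hi => by
        rw [hg]
        simp [hzero i hi, zero_pow hp.ne_zero]
    have hcc0 : cc = 0 := pow_eq_zero_iff hp.ne_zero |>.mp hcp0
    exact ⟨x 0, (sub_eq_zero.mp hcc0).symm⟩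
  · exfalso
    haveI : DecidablePred (fun i : ℕ => x i ≠ 0) := fun _ => Classical.propDecidable _
    push_neg at hzero
    obtain ⟨i1, hi1, hxi1⟩ := hzero
    set S := (Finset.Ico 1 p).filter (fun i => x i ≠ 0) with hS
    have hSsum : ∑ i ∈ S, g i = ∑ i ∈ Finset.Ico 1 p, g i := by
      refine Finset.sum_filter_of_ne fun i hi hgi => ?_
      intro hxi
      apply hgi
      rw [hg]
      simp [hxi, zero_pow hp.ne_zero]
    have hSne : S.Nonempty := ⟨i1, Finset.mem_filter.mpr ⟨hi1, hxi1⟩⟩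
    have hvg : ∀ i ∈ S, ∃ m : ℤ,
        Valued.v (g i) = ((Multiplicative.ofAdd (p * m - i) : Multiplicative ℤ) : WithZero (Multiplicative ℤ)) := by
      intro i hi
      have hxi : x i ≠ 0 := (Finset.mem_filter.mp hi).2
      have hv1 : v.valuation k (x i) ≠ 0 := (Valuation.ne_zero_iff _).mpr hxi
      obtain ⟨m, hm⟩ := WithZero.ne_zero_iff_exists.mp hv1
      refine ⟨Multiplicative.toAdd m, ?_⟩
      rw [hg]
      simp only []
      rw [hval, map_mul, map_pow, map_pow, ← hm, hπval,
        ← WithZero.coe_pow, ← WithZero.coe_pow, ← WithZero.coe_mul, WithZero.coe_inj]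
      apply Multiplicative.toAdd.injective
      rw [toAdd_mul, toAdd_pow, toAdd_pow, toAdd_ofAdd, toAdd_ofAdd]
      push_cast
      ring
    choose mm hmm using hvg
    obtain ⟨i0, hi0, hmax⟩ := S.exists_max_image (fun i => Valued.v (g i)) hSne
    have hbounds : ∀ i ∈ S, 1 ≤ i ∧ i < p := fun i hi =>
      Finset.mem_Ico.mp (Finset.mem_filter.mp hi).1
    have hstrict : ∀ i ∈ S, i ≠ i0 → Valued.v (g i) < Valued.v (g i0) := by
      intro i hiS hine
      refine lt_of_le_of_ne (hmax i hiS) fun heq => ?_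
      rw [hmm i hiS, hmm i0 hi0, WithZero.coe_inj] at heq
      have h3 := congrArg Multiplicative.toAdd heq
      rw [toAdd_ofAdd, toAdd_ofAdd] at h3
      have hib := hbounds i hiS
      have hi0b := hbounds i0 hi0
      set t : ℤ := mm i hiS - mm i0 hi0 with htdef
      have ht : (p : ℤ) * t = (i : ℤ) - (i0 : ℤ) := by rw [htdef]; push_cast at h3 ⊢; linarith
      have hpz : (2 : ℤ) ≤ (p : ℤ) := by exact_mod_cast hp.two_le
      have hi' : (1 : ℤ) ≤ i ∧ (i : ℤ) < p := by exact_mod_cast hib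
      have hi0' : (1 : ℤ) ≤ i0 ∧ (i0 : ℤ) < p := by exact_mod_cast hi0b
      have hine' : (i : ℤ) ≠ (i0 : ℤ) := by exact_mod_cast hine
      rcases lt_trichotomy t 0 with h | h | h
      · nlinarith
      · rw [h, mul_zero] at ht; omega
      · nlinarith
    have hvcc : Valued.v (cc ^ p) = Valued.v (g i0) := by
      rw [hccp, ← hSsum]
      refine Valuation.map_sum_eq_of_lt _ hi0 (fun i hi => by
        simp only [Finset.mem_sdiff, Finset.mem_singleton] at hi
        exact hstrict i hi.1 hi.2)
    have hcc0 : cc ≠ 0 := by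
      intro h
      rw [h, zero_pow hp.ne_zero, map_zero] at hvcc
      exact WithZero.zero_ne_coe (hvcc.trans (hmm i0 hi0))
    have hvnc : Valued.v cc ≠ 0 := (Valuation.ne_zero_iff _).mpr hcc0
    obtain ⟨mc, hmc⟩ := WithZero.ne_zero_iff_exists.mp hvnc
    rw [map_pow, ← hmc, hmm i0 hi0, ← WithZero.coe_pow, WithZero.coe_inj] at hvcc
    have h4 := congrArg Multiplicative.toAdd hvcc
    rw [toAdd_pow, toAdd_ofAdd, nsmul_eq_mul] at h4
    have hi0b := hbounds i0 hi0
    have hdvd : (p : ℤ) ∣ (i0 : ℤ) :=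
      ⟨mm i0 hi0 - Multiplicative.toAdd mc, by push_cast at h4 ⊢; linarith⟩
    have hi0pos : (0 : ℤ) < i0 := by exact_mod_cast hi0b.1
    have hle := Int.le_of_dvd hi0pos hdvd
    have hlt : (i0 : ℤ) < p := by exact_mod_cast hi0b.2
    omega
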